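/- Let E be a complex Hilbert space, d ≥ 1, F : Fin d → E an orthonormal family, and q : Fin d → ℝ a probability vector. Then there exists a unitary U : E ≃ₗᵢ[ℂ] E such that ∑ i, q i * ‖⟪F 0, U (F i)⟫‖² = max_{i} q i. (This is the tightness part of the paper's Result 3: the Absoluteness-of-Measurement upper bound T(q) ≤ max{q₀,…,q_{d−1}} is achieved, namely by preparing the state with p(i|A,𝟙) = qᵢ and choosing a unitary that maps the post-measurement state F_{i_m} of a maximal-probability outcome to F 0.) -/

import Mathlib

open scoped ComplexInnerProductSpace

/-- Tightness part of Result 3: the AoM upper bound `max_i q i` is achieved by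
some unitary `U`, i.e. `∑ i, q i * ‖⟪F 0, U (F i)⟫‖² = max_i q i`. -/
theorem stmt_9 {E : Type*} [NormedAddCommGroup E] [InnerProductSpace ℂ E]
    [CompleteSpace E]
    {d : ℕ} (hd : 0 < d) (F : Fin d → E) (hF : Orthonormal ℂ F)
    (q : Fin d → ℝ) (hq : ∀ i, 0 ≤ q i) (hqsum : ∑ i, q i = 1) :
    ∃ U : E ≃ₗᵢ[ℂ] E,
      ∑ i, q i * ‖⟪F ⟨0, hd⟩, U (F i)⟫‖ ^ 2 = ⨆ i, q i := by
  haveI : Nonempty (Fin d) := ⟨⟨0, hd⟩⟩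
  obtain ⟨i₀, hi₀⟩ := Finite.exists_max q
  set z : Fin d := ⟨0, hd⟩ with hz
  set w : E := F i₀ - F z with hw
  have hinner : ∀ i j, ⟪F i, F j⟫ = if i = j then 1 else 0 :=
    fun i j => orthonormal_iff_ite.mp hF i j
  set U : E ≃ₗᵢ[ℂ] E := Submodule.reflection (ℂ ∙ w)ᗮ with hU
  have hsum_mem : F i₀ + F z ∈ (ℂ ∙ w)ᗮ := by
    rw [Submodule.mem_orthogonal_singleton_iff_inner_right, hw, inner_sub_left,
      inner_add_right, inner_add_right, hinner, hinner, hinner, hinner]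
    by_cases h : i₀ = z <;> simp [h, eq_comm]
  have h₁ : U w = -w := Submodule.reflection_orthogonalComplement_singleton_eq_neg w
  have h₂ : U (F i₀ + F z) = F i₀ + F z := Submodule.reflection_mem_subspace_eq_self hsum_mem
  have hUi₀ : U (F i₀) = F z := by
    have key : U (F i₀) + U (F i₀) = F z + F z := by
      have := congrArg₂ (· + ·) h₂ h₁
      simp only [← map_add] at this
      have e1 : F i₀ + F z + w = F i₀ + F i₀ := by rw [hw]; abel
      have e2 : F i₀ + F z + -w = F z + F z := by rw [hw]; abel
      rw [e1, e2, map_add] at this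
      exact this
    exact smul_right_injective E (by norm_num : (2 : ℂ) ≠ 0)
      (by simpa [two_smul] using key)
  have hUfix : ∀ i, i ≠ i₀ → i ≠ z → U (F i) = F i := by
    intro i h1 h2
    apply Submodule.reflection_mem_subspace_eq_self
    rw [Submodule.mem_orthogonal_singleton_iff_inner_right, hw, inner_sub_left,
      hinner, hinner]
    simp [h1.symm, h2.symm]
  have hterm : ∀ i, ⟪F z, U (F i)⟫ = if i = i₀ then 1 else 0 := by
    intro i
    by_cases h1 : i = i₀
    · rw [h1, hUi₀, hinner]; simp
    · by_cases h2 : i = z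
      · -- U (F z) = F i₀
        have : U (F z) = F i₀ := by
          have : U (F z) = U (F i₀ + F z) - U (F i₀) := by rw [map_add]; abel
          rw [this, h₂, hUi₀]; abel
        rw [h2, this, hinner]
      · rw [hUfix i h1 h2, hinner]
        simp [Ne.symm h2, h1]
  refine ⟨U, ?_⟩
  have hsum : ∑ i, q i * ‖⟪F z, U (F i)⟫‖ ^ 2 = q i₀ := by
    rw [Finset.sum_eq_single i₀]
    · rw [hterm i₀]; simp
    · intro b _ hb
      rw [hterm b]; simp [hb]
    · simp
  rw [hsum]
  exact le_antisymm (le_ciSup (Finite.bddAbove_range q) i₀) (ciSup_le hi₀)
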